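/- Let G be a clock-free graph and let (A, C, B) be a separation of G with A and B non-empty. Suppose there exist vertices v1, ..., vk in C such that C is contained in the union of the closed neighbourhoods N[v1], ..., N[vk]. Let D1 be a connected component of G[A] and D2 a connected component of G[B]. Then there exist cliques X1, ..., Xk contained in C such that every path from a vertex of D1 to a vertex of D2 contains a vertex of X1 ∪ ... ∪ Xk. -/

import Mathlib

open SimpleGraph

variable {V : Type*}

/-- A hole (induced cycle on at least 4 vertices) given as an embedding of the cycle `ZMod n`. -/
def IsHoleEmb (G : SimpleGraph V) (n : ℕ) (f : ZMod n → V) : Prop :=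
  4 ≤ n ∧ Function.Injective f ∧
    ∀ i j, G.Adj (f i) (f j) ↔ (i = j + 1 ∨ j = i + 1)

/-- `G` contains a clock: a hole `C` together with a vertex not in `C` having two
non-adjacent neighbours in `C`. -/
def ContainsClock (G : SimpleGraph V) : Prop :=
  ∃ (n : ℕ) (f : ZMod n → V) (v : V),
    IsHoleEmb G n f ∧ (∀ i, v ≠ f i) ∧
      ∃ i j, G.Adj v (f i) ∧ G.Adj v (f j) ∧ f i ≠ f j ∧ ¬ G.Adj (f i) (f j)

def ClockFree (G : SimpleGraph V) : Prop := ¬ ContainsClock G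

/-- `G` has no induced diamond (`K₄` minus an edge). -/
def DiamondFree (G : SimpleGraph V) : Prop :=
  ¬ ∃ a b c d : V, a ≠ b ∧ a ≠ c ∧ a ≠ d ∧ b ≠ c ∧ b ≠ d ∧ c ≠ d ∧
    G.Adj a b ∧ G.Adj a c ∧ G.Adj a d ∧ G.Adj b c ∧ G.Adj b d ∧ ¬ G.Adj c d

/-- `X` is a cutset of `G`: removing `X` leaves a non-empty disconnected graph. -/
def IsCutset (G : SimpleGraph V) (X : Set V) : Prop :=
  (Xᶜ : Set V).Nonempty ∧ ¬ (G.induce (Xᶜ : Set V)).Connected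

def HasStarCutset (G : SimpleGraph V) : Prop :=
  ∃ X : Set V, IsCutset G X ∧ ∃ x ∈ X, ∀ y ∈ X, y = x ∨ G.Adj x y

def HasCliqueCutset (G : SimpleGraph V) : Prop :=
  ∃ X : Set V, IsCutset G X ∧ G.IsClique X

/-- `X` separates `Y` from `Z`: every path with one end in `Y` and the other in `Z`
contains a vertex of `X`. -/
def Separates (G : SimpleGraph V) (X Y Z : Set V) : Prop :=
  ∀ y ∈ Y, ∀ z ∈ Z, ∀ p : G.Walk y z, p.IsPath → ∃ x ∈ X, x ∈ p.support

def IsClawCenter (G : SimpleGraph V) (v : V) : Prop :=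
  ∃ x y z, G.Adj v x ∧ G.Adj v y ∧ G.Adj v z ∧ x ≠ y ∧ x ≠ z ∧ y ≠ z ∧
    ¬ G.Adj x y ∧ ¬ G.Adj x z ∧ ¬ G.Adj y z

/-- An induced path on `n+1` vertices given as a function from `Fin (n+1)`. -/
def IsPathEmb (G : SimpleGraph V) (n : ℕ) (f : Fin (n+1) → V) : Prop :=
  Function.Injective f ∧
    ∀ i j, G.Adj (f i) (f j) ↔ ((i : ℕ) + 1 = (j : ℕ) ∨ (j : ℕ) + 1 = (i : ℕ))

/-- Cross conditions between two paths of a pyramid sharing only the apex (index 0):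
off-apex parts are disjoint and the only possible edge joins the two far ends. -/
def PyrNoCross (G : SimpleGraph V) {n m : ℕ} (f : Fin (n+1) → V) (g : Fin (m+1) → V) : Prop :=
  ∀ i j, i ≠ 0 → j ≠ 0 →
    f i ≠ g j ∧ (G.Adj (f i) (g j) → i = Fin.last n ∧ j = Fin.last m)

/-- Cross conditions between two paths of a theta: the interiors are disjoint and
anticomplete. -/
def ThetaNoCross (G : SimpleGraph V) {n m : ℕ} (f : Fin (n+1) → V) (g : Fin (m+1) → V) : Prop :=
  ∀ i j, i ≠ 0 → i ≠ Fin.last n → j ≠ 0 → j ≠ Fin.last m →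
    f i ≠ g j ∧ ¬ G.Adj (f i) (g j)

/-- Cross conditions between two paths of a prism: they are disjoint and the only
edges join the two first ends or the two last ends. -/
def PrismNoCross (G : SimpleGraph V) {n m : ℕ} (f : Fin (n+1) → V) (g : Fin (m+1) → V) : Prop :=
  ∀ i j, f i ≠ g j ∧
    (G.Adj (f i) (g j) → (i = 0 ∧ j = 0) ∨ (i = Fin.last n ∧ j = Fin.last m))

/-- A pyramid with apex `a`, given by three induced paths from `a` to a triangle. -/
def PyramidSpec (G : SimpleGraph V) (a : V) (n₁ n₂ n₃ : ℕ)
    (f₁ : Fin (n₁+1) → V) (f₂ : Fin (n₂+1) → V) (f₃ : Fin (n₃+1) → V) : Prop :=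
  IsPathEmb G n₁ f₁ ∧ IsPathEmb G n₂ f₂ ∧ IsPathEmb G n₃ f₃ ∧
  f₁ 0 = a ∧ f₂ 0 = a ∧ f₃ 0 = a ∧
  1 ≤ n₁ ∧ 1 ≤ n₂ ∧ 1 ≤ n₃ ∧
  G.Adj (f₁ (Fin.last n₁)) (f₂ (Fin.last n₂)) ∧
  G.Adj (f₂ (Fin.last n₂)) (f₃ (Fin.last n₃)) ∧
  G.Adj (f₁ (Fin.last n₁)) (f₃ (Fin.last n₃)) ∧
  ¬(n₁ = 1 ∧ n₂ = 1) ∧ ¬(n₁ = 1 ∧ n₃ = 1) ∧ ¬(n₂ = 1 ∧ n₃ = 1) ∧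
  PyrNoCross G f₁ f₂ ∧ PyrNoCross G f₁ f₃ ∧ PyrNoCross G f₂ f₃

def IsPyramidWithApex (G : SimpleGraph V) (Q : Set V) (a : V) : Prop :=
  ∃ (n₁ n₂ n₃ : ℕ) (f₁ : Fin (n₁+1) → V) (f₂ : Fin (n₂+1) → V) (f₃ : Fin (n₃+1) → V),
    PyramidSpec G a n₁ n₂ n₃ f₁ f₂ f₃ ∧
    Q = Set.range f₁ ∪ Set.range f₂ ∪ Set.range f₃

/-- A short pyramid: a pyramid one of whose paths has length exactly one. -/
def IsShortPyramidWithApex (G : SimpleGraph V) (Q : Set V) (a : V) : Prop :=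
  ∃ (n₁ n₂ n₃ : ℕ) (f₁ : Fin (n₁+1) → V) (f₂ : Fin (n₂+1) → V) (f₃ : Fin (n₃+1) → V),
    PyramidSpec G a n₁ n₂ n₃ f₁ f₂ f₃ ∧ (n₁ = 1 ∨ n₂ = 1 ∨ n₃ = 1) ∧
    Q = Set.range f₁ ∪ Set.range f₂ ∪ Set.range f₃

/-- A theta with ends `a, b`, given by three induced paths from `a` to `b` with
pairwise disjoint, pairwise anticomplete interiors. -/
def ThetaSpec (G : SimpleGraph V) (a b : V) (n₁ n₂ n₃ : ℕ)
    (f₁ : Fin (n₁+1) → V) (f₂ : Fin (n₂+1) → V) (f₃ : Fin (n₃+1) → V) : Prop :=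
  IsPathEmb G n₁ f₁ ∧ IsPathEmb G n₂ f₂ ∧ IsPathEmb G n₃ f₃ ∧
  f₁ 0 = a ∧ f₂ 0 = a ∧ f₃ 0 = a ∧
  f₁ (Fin.last n₁) = b ∧ f₂ (Fin.last n₂) = b ∧ f₃ (Fin.last n₃) = b ∧
  1 ≤ n₁ ∧ 1 ≤ n₂ ∧ 1 ≤ n₃ ∧ a ≠ b ∧ ¬ G.Adj a b ∧
  ThetaNoCross G f₁ f₂ ∧ ThetaNoCross G f₁ f₃ ∧ ThetaNoCross G f₂ f₃

def IsThetaWithEnds (G : SimpleGraph V) (Q : Set V) (a b : V) : Prop :=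
  ∃ (n₁ n₂ n₃ : ℕ) (f₁ : Fin (n₁+1) → V) (f₂ : Fin (n₂+1) → V) (f₃ : Fin (n₃+1) → V),
    ThetaSpec G a b n₁ n₂ n₃ f₁ f₂ f₃ ∧
    Q = Set.range f₁ ∪ Set.range f₂ ∪ Set.range f₃

/-- A prism: two disjoint triangles joined by three disjoint induced paths with
no other edges between them. -/
def IsPrismOn (G : SimpleGraph V) (Q : Set V) : Prop :=
  ∃ (n₁ n₂ n₃ : ℕ) (f₁ : Fin (n₁+1) → V) (f₂ : Fin (n₂+1) → V) (f₃ : Fin (n₃+1) → V),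
    IsPathEmb G n₁ f₁ ∧ IsPathEmb G n₂ f₂ ∧ IsPathEmb G n₃ f₃ ∧
    1 ≤ n₁ ∧ 1 ≤ n₂ ∧ 1 ≤ n₃ ∧
    G.Adj (f₁ 0) (f₂ 0) ∧ G.Adj (f₂ 0) (f₃ 0) ∧ G.Adj (f₁ 0) (f₃ 0) ∧
    G.Adj (f₁ (Fin.last n₁)) (f₂ (Fin.last n₂)) ∧
    G.Adj (f₂ (Fin.last n₂)) (f₃ (Fin.last n₃)) ∧
    G.Adj (f₁ (Fin.last n₁)) (f₃ (Fin.last n₃)) ∧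
    PrismNoCross G f₁ f₂ ∧ PrismNoCross G f₁ f₃ ∧ PrismNoCross G f₂ f₃ ∧
    Q = Set.range f₁ ∪ Set.range f₂ ∪ Set.range f₃

/-- A three-path configuration: a theta, a prism, or a pyramid. -/
def IsThreePathConfig (G : SimpleGraph V) (Q : Set V) : Prop :=
  (∃ a b, IsThetaWithEnds G Q a b) ∨ IsPrismOn G Q ∨ (∃ a, IsPyramidWithApex G Q a)

/-- `D` is a connected component of the induced subgraph `G[S]`. -/
def IsComponentOf (G : SimpleGraph V) (S D : Set V) : Prop :=
  D.Nonempty ∧ D ⊆ S ∧ (G.induce D).Connected ∧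
    ∀ u ∈ D, ∀ v ∈ S, v ∉ D → ¬ G.Adj u v

/-- The weight of a set of vertices. -/
noncomputable def wSum [Fintype V] (w : V → ℝ) (S : Set V) : ℝ :=
  ∑ v, S.indicator w v

/-- A weight function: values in `[0,1]` summing to `1`. -/
def IsWeightFun [Fintype V] (w : V → ℝ) : Prop :=
  (∀ v, 0 ≤ w v ∧ w v ≤ 1) ∧ ∑ v, w v = 1

/-- `X` is a `(w,c)`-balanced separator: every component of `G \ X` has weight at most `c`. -/
def IsBalancedSep [Fintype V] (G : SimpleGraph V) (w : V → ℝ) (c : ℝ) (X : Set V) : Prop :=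
  ∀ D : Set V, IsComponentOf G (Xᶜ) D → wSum w D ≤ c

/-- `X` is a `(w,G)`-shield for `X'`, phrased via the heavy components `B`, `B'`
of the canonical separations. -/
def IsShield [Fintype V] (G : SimpleGraph V) (w : V → ℝ) (X X' : Set V) : Prop :=
  ∃ B B' : Set V,
    IsComponentOf G (Xᶜ) B ∧ 1/2 < wSum w B ∧
    IsComponentOf G (X'ᶜ) B' ∧ 1/2 < wSum w B' ∧
    ((B ∪ X ⊂ B' ∪ X') ∨ (B ∪ X = B' ∪ X' ∧ B' ⊂ B))

/-- The central bag `β(G,w,𝒳)`: the intersection of the sets `B ∪ C` over canonical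
separations `(A,C,B)` of members of `𝒳`. -/
def CentralBag [Fintype V] (G : SimpleGraph V) (w : V → ℝ) (𝓧 : Set (Set V)) : Set V :=
  {v | ∀ X ∈ 𝓧, ∀ B : Set V, IsComponentOf G (Xᶜ) B → 1/2 < wSum w B → v ∈ B ∪ X}

/-- Two separations `(A,C,B)` and `(A',C',B')` are loosely non-crossing: no path has
one end in `A ∩ C'`, the other in `A' ∩ C`, and interior in `A ∩ A'`. -/
def LooselyNonCrossing (G : SimpleGraph V) (A C A' C' : Set V) : Prop :=
  ¬ ∃ (u v : V) (p : G.Walk u v), p.IsPath ∧ u ∈ A ∩ C' ∧ v ∈ A' ∩ C ∧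
    ∀ x ∈ p.support, x ≠ u → x ≠ v → x ∈ A ∩ A'

/-- `G` has a tree decomposition of width at most `r`. -/
def HasTreeDecompOfWidthLE (G : SimpleGraph V) (r : ℝ) : Prop :=
  ∃ (ι : Type) (T : SimpleGraph ι) (τ : ι → Set V),
    T.IsTree ∧
    (∀ v : V, ∃ t, v ∈ τ t) ∧
    (∀ u v : V, G.Adj u v → ∃ t, u ∈ τ t ∧ v ∈ τ t) ∧
    (∀ v : V, (T.induce {t | v ∈ τ t}).Connected) ∧
    (∀ t, ((τ t).ncard : ℝ) - 1 ≤ r)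
namespace StarToCliqueAux

open SimpleGraph.Walk

variable {V : Type*} {G : SimpleGraph V}

/-- take by index -/
def takeN {x y : V} : (p : G.Walk x y) → (n : ℕ) → G.Walk x (p.getVert n)
  | .nil, _ => .nil
  | .cons _ _, 0 => .nil
  | .cons h p, (n+1) => .cons h (takeN p n)

def dropN {x y : V} : (p : G.Walk x y) → (n : ℕ) → G.Walk (p.getVert n) y
  | .nil, _ => .nil
  | .cons h p, 0 => .cons h p
  | .cons _ p, (n+1) => dropN p n

lemma length_takeN {x y : V} : ∀ (p : G.Walk x y) (n : ℕ), n ≤ p.length →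
    (takeN p n).length = n
  | .nil, n, h => by simp at h; simp [takeN, h]
  | .cons _ _, 0, _ => rfl
  | .cons h p, (n+1), hn => by
      simp only [takeN, Walk.length_cons]
      exact congrArg (· + 1) (length_takeN p n (by simpa using hn))

lemma length_dropN {x y : V} : ∀ (p : G.Walk x y) (n : ℕ),
    (dropN p n).length = p.length - n
  | .nil, n => by simp [dropN]
  | .cons _ _, 0 => by simp [dropN]; rfl
  | .cons h p, (n+1) => by
      simp only [dropN, Walk.length_cons]
      exact (length_dropN p n).trans (by omega)

lemma support_takeN_subset {x y : V} : ∀ (p : G.Walk x y) (n : ℕ),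
    ∀ z ∈ (takeN p n).support, z ∈ p.support
  | .nil, n => by simp [takeN]
  | .cons _ _, 0 => by simp [takeN]; intro z hz; exact Or.inl (List.mem_singleton.mp hz)
  | .cons h p, (n+1) => by
      intro z hz
      simp only [takeN, Walk.support_cons, List.mem_cons] at hz ⊢
      rcases (show z = x ∨ z ∈ (takeN p n).support from List.mem_cons.mp hz) with rfl | hz
      · exact Or.inl rfl
      · exact Or.inr (support_takeN_subset p n z hz)

lemma support_dropN_subset {x y : V} : ∀ (p : G.Walk x y) (n : ℕ),
    ∀ z ∈ (dropN p n).support, z ∈ p.support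
  | .nil, n => by
      intro z hz
      have h0 : (Walk.nil : G.Walk x x).getVert n = x := rfl
      simpa [dropN, h0] using hz
  | .cons _ _, 0 => by simp [dropN]; intro z hz; exact List.mem_cons.mp hz
  | .cons h p, (n+1) => by
      intro z hz
      simp only [Walk.support_cons, List.mem_cons]
      exact Or.inr (support_dropN_subset p n z hz)

lemma getVert_inj_of_isPath {x y : V} : ∀ (p : G.Walk x y), p.IsPath →
    ∀ s t, s ≤ p.length → t ≤ p.length → p.getVert s = p.getVert t → s = t := by
  intro p
  induction p with
  | nil => intro _ s t hs ht _; simp at hs ht; omega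
  | cons h q ih =>
    intro hp s t hs ht heq
    match s, t with
    | 0, 0 => rfl
    | 0, t+1 =>
      exfalso
      rw [Walk.getVert_zero, Walk.getVert_cons_succ] at heq
      have : q.getVert t ∈ q.support :=
        Walk.mem_support_iff_exists_getVert.mpr ⟨t, rfl, by simpa using ht⟩
      rw [← heq] at this
      exact ((Walk.cons_isPath_iff h q).mp hp).2 this
    | s+1, 0 =>
      exfalso
      rw [Walk.getVert_zero, Walk.getVert_cons_succ] at heq
      have : q.getVert s ∈ q.support :=
        Walk.mem_support_iff_exists_getVert.mpr ⟨s, rfl, by simpa using hs⟩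
      rw [heq] at this
      exact ((Walk.cons_isPath_iff h q).mp hp).2 this
    | s+1, t+1 =>
      have := ih hp.of_cons s t (by simpa using hs) (by simpa using ht)
        (by simpa using heq)
      omega


lemma exists_induced_path (S : Set V) {x y : V}
    (p0 : G.Walk x y) (hsup0 : ∀ z ∈ p0.support, z = x ∨ z = y ∨ z ∈ S)
    (hxy : x ≠ y) (hnadj : ¬ G.Adj x y) :
    ∃ (a : ℕ) (u : ℕ → V), 2 ≤ a ∧ u 0 = x ∧ u a = y ∧
      (∀ t, 0 < t → t < a → u t ∈ S) ∧
      (∀ s t, s ≤ a → t ≤ a → u s = u t → s = t) ∧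
      (∀ s t, s ≤ a → t ≤ a → (G.Adj (u s) (u t) ↔ (t = s + 1 ∨ s = t + 1))) := by
  classical
  set P : ℕ → Prop := fun m =>
    ∃ p : G.Walk x y, p.length = m ∧ ∀ z ∈ p.support, z = x ∨ z = y ∨ z ∈ S with hP
  have hPex : ∃ m, P m := ⟨p0.length, p0, rfl, hsup0⟩
  obtain ⟨p, hplen, hpsup⟩ := Nat.find_spec hPex
  have hmin : ∀ (q : G.Walk x y), (∀ z ∈ q.support, z = x ∨ z = y ∨ z ∈ S) →
      Nat.find hPex ≤ q.length := fun q hq => Nat.find_min' hPex ⟨q, rfl, hq⟩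
  -- replace p by its bypass
  have hbsup : ∀ z ∈ p.bypass.support, z = x ∨ z = y ∨ z ∈ S :=
    fun z hz => hpsup z (Walk.support_bypass_subset _ hz)
  have hblen : p.bypass.length = Nat.find hPex :=
    le_antisymm (hplen ▸ Walk.length_bypass_le p) (hmin _ hbsup)
  set q := p.bypass with hq
  have hqpath : q.IsPath := Walk.bypass_isPath p
  set a := q.length with halen
  have hmin' : ∀ (r : G.Walk x y), (∀ z ∈ r.support, z = x ∨ z = y ∨ z ∈ S) →
      a ≤ r.length := fun r hr =>
    calc a = Nat.find hPex := hblen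
    _ ≤ r.length := hmin r hr
  set u : ℕ → V := q.getVert with hu
  have hu0 : u 0 = x := Walk.getVert_zero q
  have hua : u a = y := Walk.getVert_length q
  have hinj : ∀ s t, s ≤ a → t ≤ a → u s = u t → s = t :=
    getVert_inj_of_isPath q hqpath
  have hconsec : ∀ s, s < a → G.Adj (u s) (u (s+1)) := fun s hs => q.adj_getVert_succ hs
  have ha2 : 2 ≤ a := by
    by_contra hlt
    push_neg at hlt
    have h01 : a = 0 ∨ a = 1 := by omega
    rcases h01 with h | h
    · exact hxy (by rw [← hu0, ← hua, h])
    · have h2 := hconsec 0 (by omega)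
      rw [hu0, show (0:ℕ)+1 = a by omega, hua] at h2
      exact hnadj h2
  refine ⟨a, u, ha2, hu0, hua, ?_, hinj, ?_⟩
  · intro t ht0 hta
    have : u t ∈ q.support := Walk.mem_support_iff_exists_getVert.mpr ⟨t, rfl, by omega⟩
    rcases hbsup _ this with h | h | h
    · exact absurd (hinj t 0 (by omega) (by omega) (by rw [hu0]; exact h)) (by omega)
    · exact absurd (hinj t a (by omega) (by omega) (by rw [hua]; exact h)) (by omega)
    · exact h
  · -- adjacency iff
    have main : ∀ s t, s ≤ a → t ≤ a → s + 2 ≤ t → ¬ G.Adj (u s) (u t) := by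
      intro s t hs ht hst hadj
      have hlt : (takeN q s).length = s := length_takeN q s (by omega)
      set r : G.Walk x y := (takeN q s).append (Walk.cons hadj (dropN q t)) with hr
      have hrlen : r.length = s + 1 + (a - t) := by
        rw [hr, Walk.length_append, Walk.length_cons, hlt, length_dropN]; omega
      have hrsup : ∀ z ∈ r.support, z = x ∨ z = y ∨ z ∈ S := by
        intro z hz
        rw [hr, Walk.support_append] at hz
        rcases List.mem_append.mp hz with hz | hz
        · exact hbsup z (support_takeN_subset q s z hz)
        · have htail : (Walk.cons hadj (dropN q t)).support.tail = (dropN q t).support := by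
            simp [Walk.support_cons]
          rw [htail] at hz
          exact hbsup z (support_dropN_subset q t z hz)
      have := hmin' r hrsup
      omega
    intro s t hs ht
    constructor
    · intro hadj
      by_contra hcon
      push_neg at hcon
      have hne : s ≠ t := fun h => G.irrefl (h ▸ hadj)
      rcases Nat.lt_or_ge s t with h | h
      · exact main s t hs ht (by omega) hadj
      · exact main t s ht hs (by omega) hadj.symm
    · rintro (rfl | rfl)
      · exact hconsec s (by omega)
      · exact (hconsec t (by omega)).symm


lemma glue_clock (hG : ClockFree G) {x y v : V} {a b : ℕ} {u w : ℕ → V}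
    (ha : 2 ≤ a) (hb : 2 ≤ b)
    (hu0 : u 0 = x) (hua : u a = y) (hw0 : w 0 = x) (hwb : w b = y)
    (uinj : ∀ s t, s ≤ a → t ≤ a → u s = u t → s = t)
    (winj : ∀ s t, s ≤ b → t ≤ b → w s = w t → s = t)
    (uadj : ∀ s t, s ≤ a → t ≤ a → (G.Adj (u s) (u t) ↔ (t = s + 1 ∨ s = t + 1)))
    (wadj : ∀ s t, s ≤ b → t ≤ b → (G.Adj (w s) (w t) ↔ (t = s + 1 ∨ s = t + 1)))
    (crossNe : ∀ s t, 0 < s → s < a → 0 < t → t < b → u s ≠ w t)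
    (crossAdj : ∀ s t, 0 < s → s < a → 0 < t → t < b → ¬ G.Adj (u s) (w t))
    (hvx : G.Adj v x) (hvy : G.Adj v y) (hxy : ¬ G.Adj x y)
    (hvu : ∀ t, t ≤ a → v ≠ u t) (hvw : ∀ t, t ≤ b → v ≠ w t) : False := by
  classical
  set n := a + b with hn
  have hn4 : 4 ≤ n := by omega
  haveI : NeZero n := ⟨by omega⟩
  haveI : Fact (1 < n) := ⟨by omega⟩
  set g : ℕ → V := fun t => if t ≤ a then u t else w (n - t) with hg
  have hxyne : x ≠ y := by
    intro h
    have := uinj 0 a (by omega) (le_refl a) (by rw [hu0, hua, h])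
    omega
  have hgu : ∀ t, t ≤ a → g t = u t := by intro t ht; simp [hg, ht]
  have hgw : ∀ t, a < t → g t = w (n - t) := by
    intro t ht; simp [hg, Nat.not_le.mpr ht]
  have ginj : ∀ s t, s < n → t < n → g s = g t → s = t := by
    have key : ∀ s t, s < n → t < n → s ≤ a → a < t → g s = g t → False := by
      intro s t hs ht hs1 ht1 h
      rw [hgu s hs1, hgw t ht1] at h
      have htb : 0 < n - t ∧ n - t < b := by omega
      rcases Nat.eq_zero_or_pos s with rfl | hs0
      · rw [hu0, ← hw0] at h
        have := winj 0 (n - t) (by omega) (by omega) h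
        omega
      · rcases eq_or_lt_of_le hs1 with rfl | hsa
        · rw [hua, ← hwb] at h
          have := winj (n - t) b (by omega) (le_refl b) h.symm
          omega
        · exact crossNe s (n - t) hs0 hsa htb.1 htb.2 h
    intro s t hs ht h
    by_cases hs1 : s ≤ a <;> by_cases ht1 : t ≤ a
    · exact uinj s t hs1 ht1 (by rwa [hgu s hs1, hgu t ht1] at h)
    · exact absurd h (fun h => key s t hs ht hs1 (by omega) h)
    · exact absurd h.symm (fun h => key t s ht hs ht1 (by omega) h)
    · rw [hgw s (by omega), hgw t (by omega)] at h
      have := winj (n - s) (n - t) (by omega) (by omega) h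
      omega
  have hmix : ∀ s t, s ≤ a → a < t → t < n →
      (G.Adj (g s) (g t) ↔ (t = s + 1 ∨ s = t + 1 ∨ (s = 0 ∧ t = n - 1) ∨ (t = 0 ∧ s = n - 1))) := by
    intro s t hs1 ht1 ht
    rw [hgu s hs1, hgw t ht1]
    have htb : 0 < n - t ∧ n - t < b := by omega
    rcases Nat.eq_zero_or_pos s with rfl | hs0
    · rw [hu0, ← hw0]
      rw [wadj 0 (n - t) (by omega) (by omega)]
      constructor
      · intro h; omega
      · intro h; omega
    · rcases eq_or_lt_of_le hs1 with rfl | hsa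
      · rw [hua, ← hwb]
        rw [wadj b (n - t) (le_refl b) (by omega)]
        constructor
        · intro h; omega
        · intro h; omega
      · constructor
        · intro h; exact absurd h (crossAdj s (n - t) hs0 hsa htb.1 htb.2)
        · intro h; omega
  have gadj : ∀ s t, s < n → t < n →
      (G.Adj (g s) (g t) ↔ (t = s + 1 ∨ s = t + 1 ∨ (s = 0 ∧ t = n - 1) ∨ (t = 0 ∧ s = n - 1))) := by
    intro s t hs ht
    by_cases hs1 : s ≤ a <;> by_cases ht1 : t ≤ a
    · rw [hgu s hs1, hgu t ht1, uadj s t hs1 ht1]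
      constructor
      · intro h; omega
      · intro h; omega
    · exact hmix s t hs1 (by omega) ht
    · rw [show (G.Adj (g s) (g t)) ↔ G.Adj (g t) (g s) from ⟨Adj.symm, Adj.symm⟩,
        hmix t s ht1 (by omega) hs]
      constructor
      · intro h; omega
      · intro h; omega
    · rw [hgw s (by omega), hgw t (by omega),
        wadj (n - s) (n - t) (by omega) (by omega)]
      constructor
      · intro h; omega
      · intro h; omega
  have gx : g 0 = x := by rw [hgu 0 (by omega), hu0]
  have gy : g a = y := by rw [hgu a (le_refl a), hua]
  have gv : ∀ t, t < n → v ≠ g t := by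
    intro t ht
    by_cases ht1 : t ≤ a
    · rw [hgu t ht1]; exact hvu t ht1
    · rw [hgw t (by omega)]; exact hvw (n - t) (by omega)
  -- lift to ZMod
  set f : ZMod n → V := fun i => g i.val with hf
  have hval : ∀ i : ZMod n, i.val < n := fun i => ZMod.val_lt i
  have hvadd : ∀ j : ZMod n, (j + 1).val = (j.val + 1) % n := by
    intro j
    rw [ZMod.val_add, ZMod.val_one]
  have bridge : ∀ i j : ZMod n, i = j + 1 ↔
      (i.val = j.val + 1 ∨ (j.val = n - 1 ∧ i.val = 0)) := by
    intro i j
    constructor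
    · rintro rfl
      rw [hvadd]
      by_cases h : j.val = n - 1
      · right
        refine ⟨h, ?_⟩
        rw [h, show n - 1 + 1 = n by omega, Nat.mod_self]
      · left
        rw [Nat.mod_eq_of_lt (by have := hval j; omega)]
    · intro h
      apply ZMod.val_injective
      rw [hvadd]
      rcases h with h | ⟨h1, h2⟩
      · rw [h, Nat.mod_eq_of_lt (by have h3 := hval i; omega)]
      · rw [h1, show n - 1 + 1 = n by omega, Nat.mod_self, h2]
  have hole : IsHoleEmb G n f := by
    refine ⟨hn4, ?_, ?_⟩
    · intro i j h
      exact ZMod.val_injective n (ginj _ _ (hval i) (hval j) h)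
    · intro i j
      rw [hf]
      rw [gadj _ _ (hval i) (hval j), bridge i j, bridge j i]
      have hi := hval i; have hj := hval j
      constructor
      · intro h; omega
      · intro h; omega
  apply hG
  refine ⟨n, f, v, hole, fun i => gv _ (hval i), 0, (a : ZMod n), ?_, ?_, ?_, ?_⟩
  · have : f 0 = x := by rw [hf]; simp [ZMod.val_zero, gx]
    rw [this]; exact hvx
  · have : f (a : ZMod n) = y := by
      rw [hf]; simp only []
      rw [ZMod.val_cast_of_lt (by omega), gy]
    rw [this]; exact hvy
  · have h1 : f 0 = x := by rw [hf]; simp [ZMod.val_zero, gx]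
    have h2 : f (a : ZMod n) = y := by
      rw [hf]; simp only []
      rw [ZMod.val_cast_of_lt (by omega), gy]
    rw [h1, h2]; exact hxyne
  · have h1 : f 0 = x := by rw [hf]; simp [ZMod.val_zero, gx]
    have h2 : f (a : ZMod n) = y := by
      rw [hf]; simp only []
      rw [ZMod.val_cast_of_lt (by omega), gy]
    rw [h1, h2]; exact hxy


lemma two_routes (hG : ClockFree G) {x y v : V} {D M : Set V}
    (hDMne : ∀ d ∈ D, ∀ m ∈ M, d ≠ m) (hDMadj : ∀ d ∈ D, ∀ m ∈ M, ¬ G.Adj d m)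
    (hxD : x ∉ D) (hyD : y ∉ D) (hxM : x ∉ M) (hyM : y ∉ M)
    (hvD : v ∉ D) (hvM : v ∉ M) (hvx : G.Adj v x) (hvy : G.Adj v y)
    (hxy : ¬ G.Adj x y) (hxyne : x ≠ y)
    (p : G.Walk x y) (hp : ∀ z ∈ p.support, z = x ∨ z = y ∨ z ∈ D)
    (q : G.Walk x y) (hq : ∀ z ∈ q.support, z = x ∨ z = y ∨ z ∈ M) : False := by
  obtain ⟨a, u, ha, hu0, hua, huS, uinj, uadj⟩ := exists_induced_path D p hp hxyne hxy
  obtain ⟨b, w, hb, hw0, hwb, hwS, winj, wadj⟩ := exists_induced_path M q hq hxyne hxy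
  have hmemu : ∀ t, t ≤ a → (u t = x ∨ u t = y ∨ u t ∈ D) := by
    intro t ht
    rcases Nat.eq_zero_or_pos t with rfl | h0
    · exact Or.inl hu0
    · rcases eq_or_lt_of_le ht with rfl | hta
      · exact Or.inr (Or.inl hua)
      · exact Or.inr (Or.inr (huS t h0 hta))
  have hmemw : ∀ t, t ≤ b → (w t = x ∨ w t = y ∨ w t ∈ M) := by
    intro t ht
    rcases Nat.eq_zero_or_pos t with rfl | h0
    · exact Or.inl hw0
    · rcases eq_or_lt_of_le ht with rfl | htb
      · exact Or.inr (Or.inl hwb)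
      · exact Or.inr (Or.inr (hwS t h0 htb))
  refine glue_clock hG ha hb hu0 hua hw0 hwb uinj winj uadj wadj ?_ ?_ hvx hvy hxy ?_ ?_
  · intro s t hs0 hsa ht0 htb
    exact hDMne _ (huS s hs0 hsa) _ (hwS t ht0 htb)
  · intro s t hs0 hsa ht0 htb
    exact hDMadj _ (huS s hs0 hsa) _ (hwS t ht0 htb)
  · intro t ht h
    rcases hmemu t ht with h1 | h1 | h1
    · rw [h, h1] at hvx; exact G.irrefl hvx
    · rw [h, h1] at hvy; exact G.irrefl hvy
    · exact hvD (h ▸ h1)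
  · intro t ht h
    rcases hmemw t ht with h1 | h1 | h1
    · rw [h, h1] at hvx; exact G.irrefl hvx
    · rw [h, h1] at hvy; exact G.irrefl hvy
    · exact hvM (h ▸ h1)

lemma induce_walk {S : Set V} : ∀ {α β : S}, (G.induce S).Walk α β →
    ∃ p : G.Walk α.1 β.1, ∀ z ∈ p.support, z ∈ S
  | α, _, .nil => ⟨Walk.nil, by intro z hz; simp at hz; rw [hz]; exact α.2⟩
  | α, β, .cons h q => by
    obtain ⟨p, hp⟩ := induce_walk q
    have hadj : G.Adj α.1 _ := h
    refine ⟨Walk.cons hadj p, ?_⟩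
    intro z hz
    replace hz : z ∈ α.1 :: p.support := hz
    rcases List.mem_cons.mp hz with rfl | hz
    · exact α.2
    · exact hp z hz

lemma firstExit {S T : Set V} (hcl : ∀ u z, u ∈ S → G.Adj u z → z ∉ S → z ∈ T) :
    ∀ {s t : V} (p : G.Walk s t), s ∈ S → t ∉ S →
      ∃ z w', z ∈ p.support ∧ z ∈ T ∧ w' ∈ S ∧ G.Adj z w' ∧
        ∃ r : G.Walk w' s, (∀ m ∈ r.support, m ∈ S) ∧ (∀ m ∈ r.support, m ∈ p.support) := by
  intro s t p
  induction p with
  | nil => intro hs ht; exact absurd hs ht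
  | @cons s s' t h q ih =>
    intro hs ht
    by_cases hs' : s' ∈ S
    · obtain ⟨z, w', hz, hzT, hwS, hadj, r, hr1, hr2⟩ := ih hs' ht
      refine ⟨z, w', by rw [Walk.support_cons]; exact List.mem_cons_of_mem _ hz, hzT, hwS, hadj,
        r.append (Walk.cons h.symm Walk.nil), ?_, ?_⟩
      · intro m hm
        rw [Walk.support_append] at hm
        rcases List.mem_append.mp hm with hm | hm
        · exact hr1 m hm
        · have : (Walk.cons h.symm (Walk.nil : G.Walk s s)).support.tail = [s] := rfl
          rw [this] at hm
          simp at hm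
          rw [hm]; exact hs
      · intro m hm
        rw [Walk.support_append] at hm
        rcases List.mem_append.mp hm with hm | hm
        · exact List.mem_cons_of_mem _ (hr2 m hm)
        · have : (Walk.cons h.symm (Walk.nil : G.Walk s s)).support.tail = [s] := rfl
          rw [this] at hm
          simp at hm
          rw [hm]; exact Walk.start_mem_support _
    · exact ⟨s', s, by rw [Walk.support_cons]; exact List.mem_cons_of_mem _ (Walk.start_mem_support q),
        hcl s s' hs h hs', hs, h.symm, Walk.nil, by intro m hm; simp at hm; rw [hm]; exact hs,
        by intro m hm; simp at hm; rw [hm]; exact Walk.start_mem_support _⟩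

end StarToCliqueAux

/-- Lemma `startoclique`: in a clock-free graph with a separation `(A,C,B)` where `C`
is covered by `k` closed neighbourhoods of vertices of `C`, any two components
`D₁ ⊆ A`, `D₂ ⊆ B` are separated by a union of `k` cliques inside `C`. -/
theorem star_to_clique (G : SimpleGraph V) (hG : ClockFree G)
    (A C B : Set V)
    (hAC : Disjoint A C) (hAB : Disjoint A B) (hCB : Disjoint C B)
    (hunion : A ∪ C ∪ B = Set.univ)
    (hanti : ∀ a ∈ A, ∀ b ∈ B, ¬ G.Adj a b)
    (hA : A.Nonempty) (hB : B.Nonempty)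
    (k : ℕ) (v : Fin k → V) (hv : ∀ i, v i ∈ C)
    (hcov : ∀ c ∈ C, ∃ i, c = v i ∨ G.Adj (v i) c)
    (D₁ D₂ : Set V) (hD₁ : IsComponentOf G A D₁) (hD₂ : IsComponentOf G B D₂) :
    ∃ X : Fin k → Set V, (∀ i, X i ⊆ C ∧ G.IsClique (X i)) ∧
      ∀ d₁ ∈ D₁, ∀ d₂ ∈ D₂, ∀ p : G.Walk d₁ d₂, p.IsPath →
        ∃ i, ∃ x ∈ X i, x ∈ p.support := by
  classical
  obtain ⟨d₀, hd₀⟩ := hD₂.1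
  set C₁ : Set V := {c | c ∈ C ∧ ∃ d, d ∈ D₁ ∧ G.Adj c d} with hC₁def
  set Dstar : Set V := {m | ∃ p : G.Walk m d₀, ∀ z ∈ p.support, z ∉ C₁} with hDstardef
  set K : Fin k → Set V :=
    fun i => {m | ∃ p : G.Walk m d₀, ∀ z ∈ p.support, z ∉ C₁ ∧ z ≠ v i} with hKdef
  have hD₁A : ∀ d ∈ D₁, d ∈ A := fun d hd => hD₁.2.1 hd
  have hD₂B : ∀ d ∈ D₂, d ∈ B := fun d hd => hD₂.2.1 hd
  have hCA : ∀ c ∈ C, c ∉ A := fun c hc hca => Set.disjoint_left.mp hAC hca hc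
  have hCB' : ∀ c ∈ C, c ∉ B := fun c hc hcb => Set.disjoint_left.mp hCB hc hcb
  have hD₁C₁ : ∀ d ∈ D₁, d ∉ C₁ := fun d hd hc => hCA d hc.1 (hD₁A d hd)
  have hD₂C₁ : ∀ d ∈ D₂, d ∉ C₁ := fun d hd hc => hCB' d hc.1 (hD₂B d hd)
  have hDstar_not : ∀ m ∈ Dstar, m ∉ C₁ := by
    rintro m ⟨p, hp⟩
    exact hp m p.start_mem_support
  have hK_sub : ∀ i, ∀ m ∈ K i, m ∈ Dstar := by
    rintro i m ⟨p, hp⟩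
    exact ⟨p, fun z hz => (hp z hz).1⟩
  have hK_not : ∀ i, v i ∉ K i := by
    rintro i ⟨p, hp⟩
    exact (hp _ p.start_mem_support).2 rfl
  have hDstar_ext : ∀ m z, m ∈ Dstar → G.Adj z m → z ∉ C₁ → z ∈ Dstar := by
    rintro m z ⟨p, hp⟩ hadj hz
    refine ⟨Walk.cons hadj p, ?_⟩
    intro z' hz'
    rw [Walk.support_cons] at hz'
    rcases List.mem_cons.mp hz' with rfl | hz'
    · exact hz
    · exact hp z' hz'
  have exitD₁ : ∀ u z, u ∈ D₁ → G.Adj u z → z ∉ D₁ → z ∈ C₁ := by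
    intro u z hu hadj hz
    have hzA : z ∉ A := fun hzA => hD₁.2.2.2 u hu z hzA hz hadj
    have hzB : z ∉ B := fun hzB => hanti u (hD₁A u hu) z hzB hadj
    have hzC : z ∈ C := by
      have hz' : z ∈ A ∪ C ∪ B := by rw [hunion]; exact Set.mem_univ z
      rcases hz' with (h | h) | h
      · exact absurd h hzA
      · exact h
      · exact absurd h hzB
    exact ⟨hzC, u, hu, hadj.symm⟩
  have hD₁_Dstar : ∀ d ∈ D₁, d ∉ Dstar := by
    rintro d hd ⟨p, hp⟩
    have hd₀D₁ : d₀ ∉ D₁ := fun h => Set.disjoint_left.mp hAB (hD₁A _ h) (hD₂B _ hd₀)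
    obtain ⟨z, w', hzsup, hzT, -⟩ := StarToCliqueAux.firstExit exitD₁ p hd hd₀D₁
    exact hp z hzsup hzT
  have hanti₁ : ∀ d ∈ D₁, ∀ m ∈ Dstar, d ≠ m := fun d hd m hm he => hD₁_Dstar d hd (he ▸ hm)
  have hanti₂ : ∀ d ∈ D₁, ∀ m ∈ Dstar, ¬ G.Adj d m := by
    intro d hd m hm hadj
    exact hD₁_Dstar d hd (hDstar_ext m d hm hadj (hD₁C₁ d hd))
  have hviD₁ : ∀ i, v i ∉ D₁ := fun i h => hCA _ (hv i) (hD₁A _ h)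
  have routeD : ∀ x' y', x' ∈ C₁ → y' ∈ C₁ → ∃ p : G.Walk x' y',
      ∀ z ∈ p.support, z = x' ∨ z = y' ∨ z ∈ D₁ := by
    intro x' y' hx hy
    obtain ⟨-, dx, hdx, hadjx⟩ := hx
    obtain ⟨-, dy, hdy, hadjy⟩ := hy
    obtain ⟨q0⟩ := hD₁.2.2.1.preconnected ⟨dx, hdx⟩ ⟨dy, hdy⟩
    obtain ⟨r, hr⟩ := StarToCliqueAux.induce_walk q0
    refine ⟨Walk.cons hadjx (r.append (Walk.cons hadjy.symm Walk.nil)), ?_⟩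
    intro z hz
    rw [Walk.support_cons] at hz
    rcases List.mem_cons.mp hz with rfl | hz
    · exact Or.inl rfl
    · rw [Walk.support_append] at hz
      rcases List.mem_append.mp hz with hz | hz
      · exact Or.inr (Or.inr (hr z hz))
      · have h5 : (Walk.cons hadjy.symm (Walk.nil : G.Walk y' y')).support.tail = [y'] := rfl
        rw [h5] at hz
        simp at hz
        exact Or.inr (Or.inl hz)
  have wDstar : ∀ m ∈ Dstar, ∃ r : G.Walk m d₀, ∀ z ∈ r.support, z ∈ Dstar := by
    rintro m ⟨p, hp⟩
    exact ⟨p, fun z hz => ⟨p.dropUntil z hz,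
      fun z' hz' => hp z' (Walk.support_dropUntil_subset _ _ hz')⟩⟩
  have wK : ∀ i, ∀ m ∈ K i, ∃ r : G.Walk m d₀, ∀ z ∈ r.support, z ∈ K i := by
    rintro i m ⟨p, hp⟩
    exact ⟨p, fun z hz => ⟨p.dropUntil z hz,
      fun z' hz' => hp z' (Walk.support_dropUntil_subset _ _ hz')⟩⟩
  have routeVia : ∀ (M : Set V), (∀ m ∈ M, ∃ r : G.Walk m d₀, ∀ z ∈ r.support, z ∈ M) →
      ∀ x' y' m₁ m₂, m₁ ∈ M → m₂ ∈ M → G.Adj x' m₁ → G.Adj y' m₂ →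
      ∃ q : G.Walk x' y', ∀ z ∈ q.support, z = x' ∨ z = y' ∨ z ∈ M := by
    intro M hM x' y' m₁ m₂ hm₁ hm₂ h₁ h₂
    obtain ⟨r₁, hr₁⟩ := hM m₁ hm₁
    obtain ⟨r₂, hr₂⟩ := hM m₂ hm₂
    refine ⟨Walk.cons h₁ ((r₁.append r₂.reverse).append (Walk.cons h₂.symm Walk.nil)), ?_⟩
    intro z hz
    rw [Walk.support_cons] at hz
    rcases List.mem_cons.mp hz with rfl | hz
    · exact Or.inl rfl
    rw [Walk.support_append] at hz
    rcases List.mem_append.mp hz with hz | hz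
    · rw [Walk.support_append] at hz
      rcases List.mem_append.mp hz with hz | hz
      · exact Or.inr (Or.inr (hr₁ z hz))
      · have h6 := List.mem_of_mem_tail hz
        rw [Walk.support_reverse] at h6
        exact Or.inr (Or.inr (hr₂ z (List.mem_reverse.mp h6)))
    · have h5 : (Walk.cons h₂.symm (Walk.nil : G.Walk y' y')).support.tail = [y'] := rfl
      rw [h5] at hz
      simp at hz
      exact Or.inr (Or.inl hz)
  refine ⟨fun i => {c | (c = v i ∧ v i ∈ Dstar) ∨ (c ∈ C₁ ∧ (c = v i ∨ G.Adj (v i) c) ∧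
      ((v i ∈ Dstar ∧ ∃ m ∈ K i, G.Adj c m) ∨ (v i ∉ Dstar ∧ ∃ m ∈ Dstar, G.Adj c m)))},
    ?_, ?_⟩
  · intro i
    constructor
    · intro c hc
      rcases hc with ⟨rfl, -⟩ | ⟨hc₁, -⟩
      · exact hv i
      · exact hc₁.1
    · intro α hα β hβ hne
      rcases hα with ⟨rfl, hvi⟩ | ⟨hαC, hαv, hαm⟩
      · rcases hβ with ⟨rfl, -⟩ | ⟨hβC, hβv, -⟩
        · exact absurd rfl hne
        · have hβne : β ≠ v i := fun h => hDstar_not _ hvi (h ▸ hβC)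
          exact hβv.resolve_left hβne
      · rcases hβ with ⟨rfl, hvi⟩ | ⟨hβC, hβv, hβm⟩
        · have hαne : α ≠ v i := fun h => hDstar_not _ hvi (h ▸ hαC)
          exact (hαv.resolve_left hαne).symm
        · by_contra hnadj
          have hαD₁ : α ∉ D₁ := fun h => hD₁C₁ α h hαC
          have hβD₁ : β ∉ D₁ := fun h => hD₁C₁ β h hβC
          obtain ⟨p, hp⟩ := routeD α β hαC hβC
          rcases hαm with ⟨hvi, mα, hmα, hadjα⟩ | ⟨hvi, mα, hmα, hadjα⟩
          · -- trouble case : M = K i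
            rcases hβm with ⟨-, mβ, hmβ, hadjβ⟩ | ⟨hvi', -⟩
            swap
            · exact hvi' hvi
            have hαvi : G.Adj (v i) α := hαv.resolve_left (fun h => hDstar_not _ hvi (h ▸ hαC))
            have hβvi : G.Adj (v i) β := hβv.resolve_left (fun h => hDstar_not _ hvi (h ▸ hβC))
            obtain ⟨q, hq⟩ := routeVia (K i) (wK i) α β mα mβ hmα hmβ hadjα hadjβ
            exact StarToCliqueAux.two_routes hG
              (fun d hd m hm => hanti₁ d hd m (hK_sub i m hm))
              (fun d hd m hm => hanti₂ d hd m (hK_sub i m hm))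
              hαD₁ hβD₁
              (fun h => hDstar_not α (hK_sub i α h) hαC)
              (fun h => hDstar_not β (hK_sub i β h) hβC)
              (hviD₁ i) (hK_not i) hαvi hβvi hnadj hne p hp q hq
          · -- no-trouble case : M = Dstar
            rcases hβm with ⟨hvi', -⟩ | ⟨-, mβ, hmβ, hadjβ⟩
            · exact hvi hvi'
            rcases hαv with rfl | hαvi
            · rcases hβv with rfl | hβvi
              · exact hne rfl
              · exact hnadj hβvi
            rcases hβv with rfl | hβvi
            · exact hnadj hαvi.symm
            obtain ⟨q, hq⟩ := routeVia Dstar wDstar α β mα mβ hmα hmβ hadjα hadjβ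
            exact StarToCliqueAux.two_routes hG hanti₁ hanti₂
              hαD₁ hβD₁
              (fun h => hDstar_not α h hαC)
              (fun h => hDstar_not β h hβC)
              (hviD₁ i) hvi hαvi hβvi hnadj hne p hp q hq
  · intro d₁ hd₁ d₂ hd₂ p hp
    obtain ⟨q2, hq2⟩ : ∃ q2 : G.Walk d₂ d₀, ∀ z' ∈ q2.support, z' ∈ D₂ := by
      obtain ⟨q0⟩ := hD₂.2.2.1.preconnected ⟨d₂, hd₂⟩ ⟨d₀, hd₀⟩
      exact StarToCliqueAux.induce_walk q0
    have hd₂star : d₂ ∈ Dstar := ⟨q2, fun z hz => hD₂C₁ z (hq2 z hz)⟩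
    have hd₁star : d₁ ∉ Dstar := hD₁_Dstar d₁ hd₁
    have hcl : ∀ u z, u ∈ Dstar → G.Adj u z → z ∉ Dstar → z ∈ C₁ := by
      intro u z hu hadj hz
      by_contra hzc
      exact hz (hDstar_ext u z hu hadj.symm hzc)
    obtain ⟨z, w', hzsup, hzC₁, hwD, hadj, r, hr1, hr2⟩ :=
      StarToCliqueAux.firstExit hcl p.reverse hd₂star hd₁star
    have hzsup' : z ∈ p.support := by
      rw [Walk.support_reverse] at hzsup
      exact List.mem_reverse.mp hzsup
    obtain ⟨i, hi⟩ := hcov z hzC₁.1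
    by_cases hvi : v i ∈ Dstar
    · by_cases hvip : v i ∈ p.support
      · exact ⟨i, v i, Or.inl ⟨rfl, hvi⟩, hvip⟩
      · have hwK : w' ∈ K i := by
          refine ⟨r.append q2, ?_⟩
          intro z' hz'
          rw [Walk.support_append] at hz'
          rcases List.mem_append.mp hz' with hz' | hz'
          · refine ⟨hDstar_not z' (hr1 z' hz'), ?_⟩
            intro h
            apply hvip
            have h7 := hr2 z' hz'
            rw [Walk.support_reverse] at h7
            exact h ▸ (List.mem_reverse.mp h7)
          · have hz'D₂ := hq2 z' (List.mem_of_mem_tail hz')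
            refine ⟨hD₂C₁ z' hz'D₂, fun h => ?_⟩
            exact hCB' (v i) (hv i) (h ▸ hD₂B z' hz'D₂)
        exact ⟨i, z, Or.inr ⟨hzC₁, hi, Or.inl ⟨hvi, w', hwK, hadj⟩⟩, hzsup'⟩
    · exact ⟨i, z, Or.inr ⟨hzC₁, hi, Or.inr ⟨hvi, w', hwD, hadj⟩⟩, hzsup'⟩
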